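/- Identify ℝ² with ℂ. Let X : ℝ² → ℝ² be continuously differentiable with X(0) = 0 and DX(0) invertible, let Y : ℝ² → ℝ² be continuous with Y(0) ≠ 0, and let γ : (−1,1) → ℝ² be continuously differentiable with γ(0) = 0 and γ′(0) ≠ 0. For t ≠ 0 small (so that X(γ(t)) ≠ 0, Y(γ(t)) ≠ 0, γ′(t) ≠ 0), define δ(t) ∈ ℝ/πℤ as the image of arg(X(γ(t))) + arg(Y(γ(t))) − 2·arg(γ′(t)) ∈ ℝ/2πℤ under the halving homomorphism ℝ/2πℤ → ℝ/πℤ, x ↦ x/2 (the angle between the tangent γ′(t) and the line bisecting X(γ(t)) and Y(γ(t))). Then the one-sided limits lim_{t→0⁺} δ(t) and lim_{t→0⁻} δ(t) exist in ℝ/πℤ and lim_{t→0⁺} δ(t) = lim_{t→0⁻} δ(t) + π/2 in ℝ/πℤ. -/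

import Mathlib

open Real Filter

noncomputable section

lemma coe_pi_smul_zero (k : ℤ) : (((k : ℝ) * π : ℝ) : AddCircle (π:ℝ)) = 0 :=
  (AddCircle.coe_eq_zero_iff (π:ℝ)).2 ⟨k, by simp [zsmul_eq_mul]⟩

lemma half_arg_continuousAt {z : ℂ} (hz : z ≠ 0) :
    ContinuousAt (fun w : ℂ => ((Complex.arg w / 2 : ℝ) : AddCircle (π:ℝ))) z := by
  by_cases hs : z ∈ Complex.slitPlane
  · exact ((AddCircle.continuous_mk' (π:ℝ)).continuousAt).comp
      ((Complex.continuousAt_arg hs).div_const 2)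
  · rw [Complex.mem_slitPlane_iff] at hs
    push_neg at hs
    obtain ⟨hre0, him⟩ := hs
    have hre : z.re < 0 := by
      rcases lt_or_eq_of_le hre0 with h | h
      · exact h
      · exact absurd (Complex.ext (by simp [← h]) (by simp [him])) hz
    have hargz : Complex.arg z = π := Complex.arg_eq_pi_iff.2 ⟨hre, him⟩
    have h1 := Complex.tendsto_arg_nhdsWithin_im_neg_of_re_neg_of_im_zero hre him
    have h2 := Complex.tendsto_arg_nhdsWithin_im_nonneg_of_re_neg_of_im_zero hre him
    have hcover : (nhds z) = nhdsWithin z {w : ℂ | w.im < 0} ⊔ nhdsWithin z {w : ℂ | 0 ≤ w.im} := by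
      rw [← nhdsWithin_union]
      have : {w : ℂ | w.im < 0} ∪ {w : ℂ | 0 ≤ w.im} = Set.univ := by
        ext w; simp [lt_or_ge]
      rw [this, nhdsWithin_univ]
    have hkey : ((-π / 2 : ℝ) : AddCircle (π:ℝ)) = ((π / 2 : ℝ) : AddCircle (π:ℝ)) := by
      have : (-π/2 : ℝ) = π/2 + (-1 : ℤ) * π := by push_cast; ring
      rw [this, AddCircle.coe_add, coe_pi_smul_zero, add_zero]
    rw [ContinuousAt, hcover, tendsto_sup]
    constructor
    · have := ((AddCircle.continuous_mk' (π:ℝ)).continuousAt.tendsto).comp (h1.div_const 2)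
      simp [hargz, hkey, Function.comp_def] at this ⊢
      exact this
    · have := ((AddCircle.continuous_mk' (π:ℝ)).continuousAt.tendsto).comp (h2.div_const 2)
      simp [hargz, Function.comp_def] at this ⊢
      exact this

lemma arg_mod_continuousAt {z : ℂ} (hz : z ≠ 0) :
    ContinuousAt (fun w : ℂ => ((Complex.arg w : ℝ) : AddCircle (π:ℝ))) z := by
  have h := half_arg_continuousAt hz
  have heq : (fun w : ℂ => ((Complex.arg w : ℝ) : AddCircle (π:ℝ)))
      = fun w => ((Complex.arg w / 2 : ℝ) : AddCircle (π:ℝ))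
        + ((Complex.arg w / 2 : ℝ) : AddCircle (π:ℝ)) := by
    funext w
    rw [← AddCircle.coe_add]
    norm_num
  rw [heq]
  exact h.add h

lemma half_arg_neg {z : ℂ} (hz : z ≠ 0) :
    ((Complex.arg z / 2 : ℝ) : AddCircle (π:ℝ))
      = ((Complex.arg (-z) / 2 : ℝ) : AddCircle (π:ℝ)) + ((π / 2 : ℝ) : AddCircle (π:ℝ)) := by
  have h := Complex.arg_neg_coe_angle hz
  rw [← Real.Angle.coe_add] at h
  obtain ⟨k, hk⟩ := Real.Angle.angle_eq_iff_two_pi_dvd_sub.1 h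
  have : Complex.arg z / 2 = (Complex.arg (-z) / 2 + π / 2) + ((-k - 1 : ℤ) : ℝ) * π := by
    push_cast
    linarith
  rw [this, AddCircle.coe_add, coe_pi_smul_zero, add_zero, AddCircle.coe_add]

theorem bisecting_angle_jump (X Y : ℂ → ℂ) (γ : ℝ → ℂ)
    (hX : ContDiff ℝ 1 X) (hX0 : X 0 = 0)
    (hDX : Function.Bijective (fderiv ℝ X 0))
    (hY : Continuous Y) (hY0 : Y 0 ≠ 0)
    (hγ : ContDiffOn ℝ 1 γ (Set.Ioo (-1) 1)) (hγ0 : γ 0 = 0)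
    (hγ' : deriv γ 0 ≠ 0) :
    ∃ Lm : AddCircle (π : ℝ),
      Tendsto (fun t : ℝ =>
          (((Complex.arg (X (γ t)) + Complex.arg (Y (γ t))
            - 2 * Complex.arg (deriv γ t)) / 2 : ℝ) : AddCircle (π : ℝ)))
        (nhdsWithin 0 (Set.Iio 0)) (nhds Lm) ∧
      Tendsto (fun t : ℝ =>
          (((Complex.arg (X (γ t)) + Complex.arg (Y (γ t))
            - 2 * Complex.arg (deriv γ t)) / 2 : ℝ) : AddCircle (π : ℝ)))
        (nhdsWithin 0 (Set.Ioi 0)) (nhds (Lm + ((π / 2 : ℝ) : AddCircle (π : ℝ)))) := by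
  set A := fderiv ℝ X 0 with hA
  set v := deriv γ 0 with hv
  have hIoo : Set.Ioo (-1:ℝ) 1 ∈ nhds (0:ℝ) := Ioo_mem_nhds (by norm_num) (by norm_num)
  have hγdiff : DifferentiableAt ℝ γ 0 :=
    ((hγ.differentiableOn one_ne_zero).differentiableAt hIoo)
  have hγder : HasDerivAt γ v 0 := hγdiff.hasDerivAt
  have hγcont : Tendsto γ (nhds 0) (nhds 0) := by
    simpa [hγ0] using hγdiff.continuousAt.tendsto
  -- continuity of deriv γ at 0
  have hderivcont : ContinuousAt (deriv γ) 0 := by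
    have h1 : ContinuousOn (deriv γ) (Set.Ioo (-1:ℝ) 1) :=
      hγ.continuousOn_deriv_of_isOpen isOpen_Ioo le_rfl
    exact h1.continuousAt hIoo
  -- slope limit
  have hslope : Tendsto (fun t : ℝ => t⁻¹ • γ t) (nhdsWithin 0 {(0:ℝ)}ᶜ) (nhds v) := by
    have := hasDerivAt_iff_tendsto_slope.1 hγder
    refine this.congr' ?_
    filter_upwards [self_mem_nhdsWithin] with t ht
    simp [slope, hγ0]
  -- little-o of X at 0
  have hXder : HasFDerivAt X A 0 := (hX.differentiable one_ne_zero 0).hasFDerivAt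
  have hXo : (fun w : ℂ => X w - A w) =o[nhds 0] (fun w : ℂ => w) := by
    have h := hasFDerivAt_iff_isLittleO_nhds_zero.1 hXder
    simpa [hX0] using h
  have hcomp : (fun t : ℝ => X (γ t) - A (γ t)) =o[nhds (0:ℝ)] (fun t => γ t) :=
    hXo.comp_tendsto hγcont
  have hbigO : (fun t : ℝ => γ t) =O[nhds (0:ℝ)] (fun t : ℝ => t) := by
    have := hγder.isBigO_sub
    simpa [hγ0] using this
  have hlo : (fun t : ℝ => X (γ t) - A (γ t)) =o[nhds (0:ℝ)] (fun t : ℝ => t) :=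
    hcomp.trans_isBigO hbigO
  have hlo2 : (fun t : ℝ => X (γ t) - A (γ t)) =o[nhds (0:ℝ)] (fun t : ℝ => (t : ℂ)) := by
    refine Asymptotics.IsLittleO.of_norm_right ?_
    have : (fun t : ℝ => ‖(t:ℂ)‖) = fun t : ℝ => ‖t‖ := by
      funext t; simp
    rw [this]
    exact hlo.norm_right
  have hdiv : Tendsto (fun t : ℝ => (X (γ t) - A (γ t)) / (t:ℂ)) (nhds 0) (nhds 0) :=
    hlo2.tendsto_div_nhds_zero
  have hlin : Tendsto (fun t : ℝ => A (γ t) / (t:ℂ)) (nhdsWithin 0 {(0:ℝ)}ᶜ) (nhds (A v)) := by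
    have h := (A.continuous.tendsto v).comp hslope
    refine h.congr ?_
    intro t
    simp only [Function.comp_apply, map_smul]
    rw [Complex.real_smul]
    push_cast
    rw [inv_mul_eq_div]
  have hXdiv : Tendsto (fun t : ℝ => X (γ t) / (t:ℂ)) (nhdsWithin 0 {(0:ℝ)}ᶜ) (nhds (A v)) := by
    have := (hdiv.mono_left nhdsWithin_le_nhds).add hlin
    simp only [zero_add] at this
    refine this.congr ?_
    intro t
    rw [← add_div, sub_add_cancel]
  have hAv : (A v : ℂ) ≠ 0 := by
    intro h
    apply hγ'
    have : A v = A 0 := by rw [h, map_zero]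
    exact hDX.injective this
  -- pointwise decomposition
  have hF : ∀ t : ℝ,
      (((Complex.arg (X (γ t)) + Complex.arg (Y (γ t))
        - 2 * Complex.arg (deriv γ t)) / 2 : ℝ) : AddCircle (π:ℝ))
      = ((Complex.arg (X (γ t)) / 2 : ℝ) : AddCircle (π:ℝ))
        + ((Complex.arg (Y (γ t)) / 2 : ℝ) : AddCircle (π:ℝ))
        - ((Complex.arg (deriv γ t) : ℝ) : AddCircle (π:ℝ)) := by
    intro t
    have h1 : ((Complex.arg (X (γ t)) + Complex.arg (Y (γ t))
        - 2 * Complex.arg (deriv γ t)) / 2 : ℝ)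
        = Complex.arg (X (γ t)) / 2 + Complex.arg (Y (γ t)) / 2
          - Complex.arg (deriv γ t) := by ring
    rw [h1, AddCircle.coe_sub, AddCircle.coe_add]
  -- limits of the easy parts (along nhds 0)
  have hYlim : Tendsto (fun t : ℝ => ((Complex.arg (Y (γ t)) / 2 : ℝ) : AddCircle (π:ℝ)))
      (nhds 0) (nhds ((Complex.arg (Y 0) / 2 : ℝ) : AddCircle (π:ℝ))) :=
    (half_arg_continuousAt hY0).tendsto.comp ((hY.tendsto 0).comp hγcont)
  have hglim : Tendsto (fun t : ℝ => ((Complex.arg (deriv γ t) : ℝ) : AddCircle (π:ℝ)))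
      (nhds 0) (nhds ((Complex.arg v : ℝ) : AddCircle (π:ℝ))) :=
    (arg_mod_continuousAt hγ').tendsto.comp hderivcont.tendsto
  -- X-part limits
  have hXright : Tendsto (fun t : ℝ => ((Complex.arg (X (γ t)) / 2 : ℝ) : AddCircle (π:ℝ)))
      (nhdsWithin 0 (Set.Ioi 0))
      (nhds ((Complex.arg (A v) / 2 : ℝ) : AddCircle (π:ℝ))) := by
    have hsub : nhdsWithin (0:ℝ) (Set.Ioi 0) ≤ nhdsWithin 0 {(0:ℝ)}ᶜ :=
      nhdsWithin_mono 0 (fun t ht => ne_of_gt ht)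
    have h := (half_arg_continuousAt hAv).tendsto.comp (hXdiv.mono_left hsub)
    refine h.congr' ?_
    filter_upwards [self_mem_nhdsWithin] with t ht
    have : Complex.arg (X (γ t) / (t:ℂ)) = Complex.arg (X (γ t)) := by
      rw [div_eq_inv_mul, ← Complex.ofReal_inv]
      exact Complex.arg_real_mul _ (inv_pos.2 ht)
    simp [Function.comp, this]
  have hXleft : Tendsto (fun t : ℝ => ((Complex.arg (X (γ t)) / 2 : ℝ) : AddCircle (π:ℝ)))
      (nhdsWithin 0 (Set.Iio 0))
      (nhds ((Complex.arg (-(A v)) / 2 : ℝ) : AddCircle (π:ℝ))) := by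
    have hsub : nhdsWithin (0:ℝ) (Set.Iio 0) ≤ nhdsWithin 0 {(0:ℝ)}ᶜ :=
      nhdsWithin_mono 0 (fun t ht => ne_of_lt ht)
    have hneg : Tendsto (fun t : ℝ => -(X (γ t) / (t:ℂ))) (nhdsWithin 0 (Set.Iio 0))
        (nhds (-(A v))) := (hXdiv.mono_left hsub).neg
    have h := (half_arg_continuousAt (neg_ne_zero.2 hAv)).tendsto.comp hneg
    refine h.congr' ?_
    filter_upwards [self_mem_nhdsWithin] with t ht
    have : Complex.arg (-(X (γ t) / (t:ℂ))) = Complex.arg (X (γ t)) := by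
      have h1 : -(X (γ t) / (t:ℂ)) = ((-t)⁻¹ : ℝ) * X (γ t) := by
        push_cast
        rw [inv_neg, neg_mul, inv_mul_eq_div]
      rw [h1]
      exact Complex.arg_real_mul _ (inv_pos.2 (neg_pos.2 ht))
    simp [Function.comp, this]
  -- assemble
  refine ⟨((Complex.arg (-(A v)) / 2 : ℝ) : AddCircle (π:ℝ))
    + ((Complex.arg (Y 0) / 2 : ℝ) : AddCircle (π:ℝ))
    - ((Complex.arg v : ℝ) : AddCircle (π:ℝ)), ?_, ?_⟩
  · have := (hXleft.add (hYlim.mono_left nhdsWithin_le_nhds)).sub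
      (hglim.mono_left nhdsWithin_le_nhds)
    exact this.congr (fun t => (hF t).symm)
  · have := (hXright.add (hYlim.mono_left nhdsWithin_le_nhds)).sub
      (hglim.mono_left nhdsWithin_le_nhds)
    have heq : ((Complex.arg (A v) / 2 : ℝ) : AddCircle (π:ℝ))
        + ((Complex.arg (Y 0) / 2 : ℝ) : AddCircle (π:ℝ))
        - ((Complex.arg v : ℝ) : AddCircle (π:ℝ))
        = (((Complex.arg (-(A v)) / 2 : ℝ) : AddCircle (π:ℝ))
          + ((Complex.arg (Y 0) / 2 : ℝ) : AddCircle (π:ℝ))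
          - ((Complex.arg v : ℝ) : AddCircle (π:ℝ)))
          + ((π / 2 : ℝ) : AddCircle (π:ℝ)) := by
      rw [half_arg_neg hAv]
      abel
    rw [← heq]
    exact this.congr (fun t => (hF t).symm)
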